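/- For all real numbers x, y, s with 0 ≤ x, 0 ≤ y, x + y ≤ s and s ≤ 1, the inequality Λ(π(s−x−y)) − Λ(π(s−y)) + Λ(πy) − Λ(π(x+y)) + Λ(πx) ≤ 4Λ(π/4) holds, with equality if and only if (x, y, s) = (1/2, 1/4, 1). -/

import Mathlib

open Real intervalIntegral MeasureTheory Set

/-- The Lobachevsky function `Λ(θ) = -∫₀^θ log|2 sin t| dt`. -/
noncomputable def Lob (θ : ℝ) : ℝ :=
  -∫ t in (0:ℝ)..θ, Real.log |2 * Real.sin t|

namespace LobAux

noncomputable def g (t : ℝ) : ℝ := Real.log |2 * Real.sin t|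

lemma g_meas : Measurable g :=
  ((Real.measurable_sin.const_mul 2).abs).log

lemma g_per : Function.Periodic g π := by
  intro t
  simp only [g, Real.sin_add_pi, mul_neg, abs_neg]

lemma g_even (t : ℝ) : g (-t) = g t := by
  simp only [g, Real.sin_neg, mul_neg, abs_neg]

lemma g_contAt {θ : ℝ} (h : Real.sin θ ≠ 0) : ContinuousAt g θ := by
  apply ContinuousAt.log
  · exact ((continuous_const.mul Real.continuous_sin).abs).continuousAt
  · simp [abs_eq_zero, h]

lemma intLog01 : IntervalIntegrable Real.log volume 0 1 := by
  have h : IntervalIntegrable (fun x : ℝ => -Real.log x) volume 0 1 := by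
    apply intervalIntegrable_deriv_of_nonneg (g := fun x : ℝ => x - x * Real.log x)
    · exact (continuous_id.sub Real.continuous_mul_log).continuousOn
    · intro x hx
      rw [show min (0:ℝ) 1 = 0 by norm_num, show max (0:ℝ) 1 = 1 by norm_num] at hx
      have h1 : HasDerivAt (fun x : ℝ => x - x * Real.log x) (1 - (Real.log x + 1)) x :=
        (hasDerivAt_id x).sub (Real.hasDerivAt_mul_log hx.1.ne')
      simpa using h1.congr_deriv (by ring)
    · intro x hx
      rw [show min (0:ℝ) 1 = 0 by norm_num, show max (0:ℝ) 1 = 1 by norm_num] at hx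
      simp only [neg_nonneg]
      exact Real.log_nonpos hx.1.le hx.2.le
  have h2 : Real.log = (-fun x : ℝ => -Real.log x) := by ext x; simp
  rw [h2]; exact h.neg

lemma intLog : IntervalIntegrable Real.log volume 0 (π/2) := by
  refine intLog01.trans ?_
  apply ContinuousOn.intervalIntegrable
  intro z hz
  rw [uIcc_of_le (by nlinarith [Real.pi_gt_three])] at hz
  exact (Real.continuousAt_log (by nlinarith [hz.1])).continuousWithinAt

lemma intG1 : IntervalIntegrable g volume 0 (π/2) := by
  have hb : IntervalIntegrable (fun t : ℝ => Real.log π - Real.log t) volume 0 (π/2) :=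
    (_root_.intervalIntegrable_const).sub intLog
  refine hb.mono_fun' g_meas.aestronglyMeasurable.restrict ?_
  rw [uIoc_of_le (by positivity : (0:ℝ) ≤ π/2)]
  refine (ae_restrict_iff' measurableSet_Ioc).2 (Filter.Eventually.of_forall fun t ht => ?_)
  have hπ := Real.pi_pos
  have hs : 0 < Real.sin t := Real.sin_pos_of_pos_of_lt_pi ht.1 (by linarith [ht.2])
  have habs : |2 * Real.sin t| = 2 * Real.sin t := abs_of_pos (by linarith)
  have hlogt : Real.log t ≤ Real.log (π/2) := Real.log_le_log ht.1 ht.2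
  have hlog2 : Real.log (π/2) = Real.log π - Real.log 2 := by
    rw [Real.log_div (by positivity) (by norm_num)]
  simp only [Real.norm_eq_abs, g, habs]
  rw [abs_le]
  constructor
  · -- lower bound : -(log π - log t) ≤ log (2 sin t), i.e. log(t/π) ≤ log (2 sin t)
    have hj : 2 / π * t ≤ Real.sin t := Real.mul_le_sin ht.1.le ht.2
    have hj' : 2 * t ≤ Real.sin t * π := by
      rw [div_mul_eq_mul_div, div_le_iff₀ hπ] at hj
      linarith
    have h1 : t / π ≤ 2 * Real.sin t := by
      rw [div_le_iff₀ hπ]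
      nlinarith
    have := Real.log_le_log (div_pos ht.1 hπ) h1
    rw [Real.log_div ht.1.ne' hπ.ne'] at this
    linarith
  · -- upper bound
    have h2 : 2 * Real.sin t ≤ 2 := by nlinarith [Real.sin_le_one t]
    have := Real.log_le_log (by linarith) h2
    have hlog2' : Real.log 2 ≤ Real.log π - Real.log t := by linarith [hlogt, hlog2.symm.le]
    linarith

lemma intG2 : IntervalIntegrable g volume (π/2) π := by
  have h := intG1.comp_sub_left π
  have heq : (fun x : ℝ => g (π - x)) = g := funext fun x => by
    simp only [g, Real.sin_pi_sub]
  rw [heq] at h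
  rw [show π - (0:ℝ) = π by ring, show π - π/2 = π/2 by ring] at h
  exact h.symm

lemma intG0π : IntervalIntegrable g volume 0 π := intG1.trans intG2


lemma intGn : ∀ n : ℕ, IntervalIntegrable g volume (-(n*π)) (n*π) := by
  intro n
  induction n with
  | zero => simp
  | succ n ih =>
    have hπ := Real.pi_pos
    -- right piece : from (0, π) shifted by n*π
    have hr : IntervalIntegrable g volume (n*π) ((n+1)*π) := by
      have h := intG0π.comp_sub_right (n*π)
      have heq : (fun x : ℝ => g (x - n*π)) = g := funext fun x => g_per.sub_nat_mul_eq n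
      rw [heq] at h
      rw [show (0:ℝ) + n*π = n*π by ring, show π + n*π = (n+1)*π by ring] at h
      exact h
    have hl : IntervalIntegrable g volume (-((n+1)*π)) (-(n*π)) := by
      have h := intG0π.comp_add_right ((n+1)*π)
      have heq : (fun x : ℝ => g (x + (n+1)*π)) = g := funext fun x => by
        have := (g_per.nat_mul (n+1)) x
        push_cast at this ⊢
        exact this
      rw [heq] at h
      rw [show (0:ℝ) - (n+1)*π = -((n+1)*π) by ring, show π - (n+1)*π = -(n*π) by ring] at h
      exact h
    have := (hl.trans ih).trans hr
    push_cast at this ⊢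
    exact this

lemma hInt : ∀ a b : ℝ, IntervalIntegrable g volume a b := by
  intro a b
  have hπ := Real.pi_pos
  obtain ⟨n, hn⟩ := exists_nat_ge (max |a| |b| / π)
  rw [div_le_iff₀ hπ] at hn
  refine (intGn n).mono_set ?_
  have h0 : (0:ℝ) ≤ n*π := by positivity
  have h1 : Set.uIcc (-(n*π)) (n*π) = Set.Icc (-(n*π)) (n*π) :=
    Set.uIcc_of_le (by linarith)
  rw [h1]
  have hm : ∀ c : ℝ, |c| ≤ n*π → c ∈ Set.Icc (-(n*π)) (n*π) := fun c hc => by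
    rw [Set.mem_Icc]
    constructor <;> [linarith [neg_abs_le c]; linarith [le_abs_self c]]
  exact Set.uIcc_subset_Icc (hm a (le_trans (le_max_left _ _) hn))
    (hm b (le_trans (le_max_right _ _) hn))

lemma Lob_eq (θ : ℝ) : Lob θ = -∫ t in (0:ℝ)..θ, g t := rfl

lemma LobCont : Continuous Lob :=
  (intervalIntegral.continuous_primitive hInt 0).neg

lemma Lob_deriv {θ : ℝ} (h : Real.sin θ ≠ 0) : HasDerivAt Lob (-(g θ)) θ := by
  have := (intervalIntegral.integral_hasDerivAt_right (hInt 0 θ)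
    g_meas.aestronglyMeasurable.stronglyMeasurableAtFilter (g_contAt h)).neg
  exact this

lemma Lob_zero : Lob 0 = 0 := by simp [Lob]

lemma Lob_neg (θ : ℝ) : Lob (-θ) = -Lob θ := by
  have h := intervalIntegral.integral_comp_neg (a := 0) (b := θ) (f := g)
  have heq : (fun x : ℝ => g (-x)) = g := funext g_even
  rw [heq, neg_zero] at h
  -- h : ∫ x in 0..θ, g x = ∫ x in -θ..0, g x
  rw [Lob_eq, Lob_eq, intervalIntegral.integral_symm, ← h]

lemma intPi : ∫ t in (0:ℝ)..π, g t = 0 := by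
  have hπ := Real.pi_pos
  set S := ∫ t in (0:ℝ)..(π/2), g t with hS
  have h1 : ∫ t in (π/2)..π, g t = S := by
    have h := intervalIntegral.integral_comp_sub_left (a := 0) (b := π/2) g π
    have heq : (fun x : ℝ => g (π - x)) = g := funext fun x => by
      simp only [g, Real.sin_pi_sub]
    rw [heq] at h
    rw [show π - π/2 = π/2 by ring, show π - (0:ℝ) = π by ring] at h
    exact h.symm
  have h2 : ∫ t in (0:ℝ)..π, g t = 2*S := by
    rw [← intervalIntegral.integral_add_adjacent_intervals intG1 intG2, h1]
    ring
  have h3 : ∫ x in (0:ℝ)..(π/2), g (2*x) = S := by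
    have h := intervalIntegral.integral_comp_mul_left (a := 0) (b := π/2) g (two_ne_zero)
    rw [show (2:ℝ) * (π/2) = π by ring, mul_zero, h2] at h
    rw [h]
    simp
  have hshift : IntervalIntegrable (fun x : ℝ => g (x + π/2)) volume 0 (π/2) := by
    have h := intG2.comp_add_right (π/2)
    rw [show π/2 - π/2 = (0:ℝ) by ring, show π - π/2 = π/2 by ring] at h
    exact h
  have h4 : ∫ x in (0:ℝ)..(π/2), g (2*x)
      = S + ∫ x in (0:ℝ)..(π/2), g (x + π/2) := by
    have key : ∀ x ∈ Set.Ioo (0:ℝ) (π/2), g (2*x) = g x + g (x + π/2) := by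
      intro x hx
      have hsx : 0 < Real.sin x := Real.sin_pos_of_pos_of_lt_pi hx.1 (by linarith [hx.2])
      have hcx : 0 < Real.cos x := Real.cos_pos_of_mem_Ioo ⟨by linarith [hx.1], hx.2⟩
      have e1 : g (x + π/2) = Real.log |2 * Real.cos x| := by
        simp only [g, Real.sin_add_pi_div_two]
      have e2 : Real.sin (2*x) = 2 * Real.sin x * Real.cos x := by
        rw [Real.sin_two_mul]
      rw [show g (2*x) = Real.log |2 * Real.sin (2*x)| from rfl,
        show g x = Real.log |2 * Real.sin x| from rfl, e1]
      rw [e2, abs_of_pos (by positivity), abs_of_pos (by positivity), abs_of_pos (by positivity),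
        show 2 * (2 * Real.sin x * Real.cos x) = (2*Real.sin x) * (2*Real.cos x) by ring,
        Real.log_mul (by positivity) (by positivity)]
    have hnull : ∀ᵐ (z : ℝ) ∂(volume : Measure ℝ), z ≠ π/2 := by
      rw [MeasureTheory.ae_iff]
      simp only [ne_eq, not_not, Set.setOf_eq_eq_singleton]
      exact measure_singleton _
    have hcong : ∫ x in (0:ℝ)..(π/2), g (2*x)
        = ∫ x in (0:ℝ)..(π/2), (g x + g (x + π/2)) := by
      apply intervalIntegral.integral_congr_ae
      rw [Set.uIoc_of_le (by positivity : (0:ℝ) ≤ π/2)]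
      filter_upwards [hnull] with z hz hmem
      exact key z ⟨hmem.1, lt_of_le_of_ne hmem.2 hz⟩
    rw [hcong, intervalIntegral.integral_add intG1 hshift]
  have h5 : ∫ x in (0:ℝ)..(π/2), g (x + π/2) = S := by
    have h := intervalIntegral.integral_comp_add_right (a := 0) (b := π/2) g (π/2)
    rw [show (0:ℝ) + π/2 = π/2 by ring, show π/2 + π/2 = π by ring] at h
    rw [h, h1]
  have hS0 : S = 0 := by
    rw [h4, h5] at h3
    linarith
  rw [h2, hS0]; ring

lemma Lob_periodic (θ : ℝ) : Lob (θ + π) = Lob θ := by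
  rw [Lob_eq, Lob_eq,
    ← intervalIntegral.integral_add_adjacent_intervals (hInt 0 θ) (hInt θ (θ+π)),
    g_per.intervalIntegral_add_eq θ 0, zero_add, intPi]
  ring

lemma Lob_reflect (u : ℝ) : Lob (π - u) = -Lob u := by
  rw [show π - u = -u + π by ring, Lob_periodic, Lob_neg]

lemma Lob_reflect' (u : ℝ) : Lob (π*(1-u)) = -Lob (π*u) := by
  rw [show π*(1-u) = π - π*u by ring, Lob_reflect]

lemma Lob_half : Lob (π/2) = 0 := by
  have h := Lob_reflect (π/2)
  rw [show π - π/2 = π/2 by ring] at h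
  linarith

lemma Lob_pi : Lob π = 0 := by
  have h := Lob_reflect 0
  rw [sub_zero, Lob_zero] at h
  simpa using h


lemma pair_deriv (σ : ℝ) {v : ℝ} (h1 : 0 < v) (h2 : v < σ) (h3 : σ < π) :
    HasDerivAt (fun w => Lob w + Lob (σ - w)) (g (σ - v) - g v) v := by
  have hs1 : Real.sin v ≠ 0 :=
    (Real.sin_pos_of_pos_of_lt_pi h1 (by linarith)).ne'
  have hs2 : Real.sin (σ - v) ≠ 0 :=
    (Real.sin_pos_of_pos_of_lt_pi (by linarith) (by linarith [Real.pi_pos])).ne'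
  have d1 := Lob_deriv hs1
  have d2 : HasDerivAt (fun w => Lob (σ - w)) (g (σ - v)) v := by
    have hin : HasDerivAt (fun w : ℝ => σ - w) (-1) v := by
      simpa using (hasDerivAt_id' v).const_sub σ
    have := (Lob_deriv hs2).comp v hin
    simpa [Function.comp_def] using this
  have := d1.add d2
  exact this.congr_deriv (by ring)

lemma pair_lt {σ u : ℝ} (h0 : 0 < σ) (hπ : σ < π) (h1 : 0 ≤ u) (h2 : u ≤ σ)
    (hne : u ≠ σ/2) : Lob u + Lob (σ - u) < 2 * Lob (σ/2) := by
  have hpi := Real.pi_pos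
  set h : ℝ → ℝ := fun v => Lob v + Lob (σ - v) with hh
  have hcont : Continuous h :=
    LobCont.add (LobCont.comp (continuous_const.sub continuous_id))
  have hval : h (σ/2) = 2 * Lob (σ/2) := by
    simp only [hh, show σ - σ/2 = σ/2 by ring]
    ring
  have hmono : StrictMonoOn h (Set.Icc 0 (σ/2)) := by
    apply strictMonoOn_of_deriv_pos (convex_Icc _ _) hcont.continuousOn
    intro v hv
    rw [interior_Icc] at hv
    have hv2 : v < σ := by linarith [hv.2]
    rw [(pair_deriv σ hv.1 hv2 hπ).deriv]
    have hsv : 0 < Real.sin v := Real.sin_pos_of_pos_of_lt_pi hv.1 (by linarith)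
    have hdiff : Real.sin (σ - v) - Real.sin v
        = 2 * Real.sin ((σ - v - v)/2) * Real.cos ((σ - v + v)/2) := Real.sin_sub_sin _ _
    have hc : 0 < Real.cos ((σ - v + v)/2) := by
      apply Real.cos_pos_of_mem_Ioo
      constructor <;> [linarith; (rw [show (σ - v + v)/2 = σ/2 by ring]; linarith)]
    have hsin : 0 < Real.sin ((σ - v - v)/2) := by
      apply Real.sin_pos_of_pos_of_lt_pi
      · linarith [hv.2]
      · nlinarith [hv.1]
    have hlt : Real.sin v < Real.sin (σ - v) := by nlinarith
    have : Real.log (2 * Real.sin v) < Real.log (2 * Real.sin (σ - v)) :=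
      Real.log_lt_log (by linarith) (by linarith)
    have e1 : g v = Real.log (2 * Real.sin v) := by
      rw [show g v = Real.log |2 * Real.sin v| from rfl, abs_of_pos (by linarith)]
    have e2 : g (σ - v) = Real.log (2 * Real.sin (σ - v)) := by
      rw [show g (σ - v) = Real.log |2 * Real.sin (σ - v)| from rfl,
        abs_of_pos (by linarith)]
    rw [e1, e2]
    linarith
  have hanti : StrictAntiOn h (Set.Icc (σ/2) σ) := by
    apply strictAntiOn_of_deriv_neg (convex_Icc _ _) hcont.continuousOn
    intro v hv
    rw [interior_Icc] at hv
    have hv1 : 0 < v := by linarith [hv.1]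
    rw [(pair_deriv σ hv1 hv.2 hπ).deriv]
    have hsv : 0 < Real.sin v := Real.sin_pos_of_pos_of_lt_pi hv1 (by linarith [hv.2])
    have hsσv : 0 < Real.sin (σ - v) := by
      apply Real.sin_pos_of_pos_of_lt_pi
      · linarith [hv.2]
      · linarith [hv.1]
    have hdiff : Real.sin v - Real.sin (σ - v)
        = 2 * Real.sin ((v - (σ - v))/2) * Real.cos ((v + (σ - v))/2) := Real.sin_sub_sin _ _
    have hc : 0 < Real.cos ((v + (σ - v))/2) := by
      apply Real.cos_pos_of_mem_Ioo
      constructor <;> [linarith; (rw [show (v + (σ - v))/2 = σ/2 by ring]; linarith)]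
    have hsin : 0 < Real.sin ((v - (σ - v))/2) := by
      apply Real.sin_pos_of_pos_of_lt_pi
      · linarith [hv.1]
      · nlinarith [hv.2]
    have hlt : Real.sin (σ - v) < Real.sin v := by nlinarith
    have : Real.log (2 * Real.sin (σ - v)) < Real.log (2 * Real.sin v) :=
      Real.log_lt_log (by linarith) (by linarith)
    have e1 : g v = Real.log (2 * Real.sin v) := by
      rw [show g v = Real.log |2 * Real.sin v| from rfl, abs_of_pos (by linarith)]
    have e2 : g (σ - v) = Real.log (2 * Real.sin (σ - v)) := by
      rw [show g (σ - v) = Real.log |2 * Real.sin (σ - v)| from rfl,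
        abs_of_pos (by linarith)]
    rw [e1, e2]
    linarith
  rcases lt_or_gt_of_ne hne with hlt | hgt
  · have := hmono ⟨h1, hlt.le⟩ ⟨by linarith, le_refl _⟩ hlt
    rw [hval] at this
    exact this
  · have := hanti ⟨le_refl _, by linarith⟩ ⟨hgt.le, h2⟩ hgt
    rw [hval] at this
    exact this

lemma pair_le {σ u : ℝ} (h0 : 0 < σ) (hπ : σ < π) (h1 : 0 ≤ u) (h2 : u ≤ σ) :
    Lob u + Lob (σ - u) ≤ 2 * Lob (σ/2) := by
  rcases eq_or_ne u (σ/2) with rfl | hne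
  · rw [show σ - σ/2 = σ/2 by ring]; ring_nf; exact le_refl _
  · exact (pair_lt h0 hπ h1 h2 hne).le


lemma Lob_quarter_pos : 0 < Lob (π/4) := by
  have hpi := Real.pi_pos
  have h := pair_lt (σ := π/2) (u := 0) (by positivity) (by linarith)
    (le_refl 0) (by positivity) (by positivity)
  rw [show π/2 - (0:ℝ) = π/2 by ring, show π/2/2 = π/4 by ring, Lob_zero, Lob_half] at h
  linarith

lemma G_deriv {t : ℝ} (h1 : 0 < t) (h2 : t < 1) :
    HasDerivAt (fun t => 4 * Lob (π*(1-t)/2) + Lob (π*t))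
      (π * (2 * g (π*(1-t)/2) - g (π*t))) t := by
  have hpi := Real.pi_pos
  have hs1 : Real.sin (π*(1-t)/2) ≠ 0 := by
    refine (Real.sin_pos_of_pos_of_lt_pi ?_ ?_).ne' <;> nlinarith
  have hs2 : Real.sin (π*t) ≠ 0 := by
    refine (Real.sin_pos_of_pos_of_lt_pi ?_ ?_).ne' <;> nlinarith
  have hin1 : HasDerivAt (fun t : ℝ => π*(1-t)/2) (-(π/2)) t := by
    have : HasDerivAt (fun t : ℝ => π*(1-t)/2) (π * (0 - 1) / 2) t :=
      (((hasDerivAt_const t (1:ℝ)).sub (hasDerivAt_id t)).const_mul π).div_const 2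
    convert this using 1
    ring
  have hin2 : HasDerivAt (fun t : ℝ => π*t) π t := by
    simpa using (hasDerivAt_id t).const_mul π
  have d1 : HasDerivAt (fun t : ℝ => Lob (π*(1-t)/2)) (-(g (π*(1-t)/2)) * (-(π/2))) t :=
    by have := (Lob_deriv hs1).comp t hin1; exact this
  have d2 : HasDerivAt (fun t : ℝ => Lob (π*t)) (-(g (π*t)) * π) t :=
    (Lob_deriv hs2).comp t hin2
  have := (d1.const_mul 4).add d2
  exact this.congr_deriv (by ring)

lemma G_lt {t : ℝ} (h1 : 0 ≤ t) (h2 : t ≤ 1) (hne : t ≠ 1/2) :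
    4 * Lob (π*(1-t)/2) + Lob (π*t) < 4 * Lob (π/4) := by
  have hpi := Real.pi_pos
  set H : ℝ → ℝ := fun t => 4 * Lob (π*(1-t)/2) + Lob (π*t) with hH
  have hcont : Continuous H := by
    apply Continuous.add
    · exact continuous_const.mul (LobCont.comp (by continuity))
    · exact LobCont.comp (by continuity)
  have hval : H (1/2) = 4 * Lob (π/4) := by
    have e1 : π*(1-(1:ℝ)/2)/2 = π/4 := by ring
    have e2 : π*((1:ℝ)/2) = π/2 := by ring
    simp only [hH, e1, e2, Lob_half]
    ring
  have sign : ∀ v : ℝ, 0 < v → v < 1 → v ≠ 1/2 →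
      ((v < 1/2 → 0 < deriv H v) ∧ (1/2 < v → deriv H v < 0)) := by
    intro v hv1 hv2 hv3
    rw [(G_deriv hv1 hv2).deriv]
    obtain ⟨a, ha⟩ : ∃ a : ℝ, a = π*v/2 := ⟨_, rfl⟩
    have ha1 : 0 < a := by rw [ha]; positivity
    have ha2 : a < π/2 := by rw [ha]; nlinarith
    have hca : 0 < Real.cos a := Real.cos_pos_of_mem_Ioo ⟨by linarith, ha2⟩
    have hsa : 0 < Real.sin a := Real.sin_pos_of_pos_of_lt_pi ha1 (by linarith)
    have hsin1 : Real.sin (π*(1-v)/2) = Real.cos a := by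
      rw [show π*(1-v)/2 = π/2 - a by rw [ha]; ring, Real.sin_pi_div_two_sub]
    have hsin2 : Real.sin (π*v) = 2 * Real.sin a * Real.cos a := by
      rw [show π*v = 2*a by rw [ha]; ring, Real.sin_two_mul]
    have e1 : g (π*(1-v)/2) = Real.log (2 * Real.cos a) := by
      rw [show g (π*(1-v)/2) = Real.log |2 * Real.sin (π*(1-v)/2)| from rfl, hsin1,
        abs_of_pos (by linarith)]
    have e2 : g (π*v) = Real.log (4 * Real.sin a * Real.cos a) := by
      rw [show g (π*v) = Real.log |2 * Real.sin (π*v)| from rfl, hsin2,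
        abs_of_pos (by positivity), show 2*(2*Real.sin a*Real.cos a) = 4*Real.sin a*Real.cos a by ring]
    have e3 : 2 * Real.log (2 * Real.cos a) = Real.log (4 * Real.cos a * Real.cos a) := by
      rw [Real.log_mul (by norm_num : (2:ℝ) ≠ 0) hca.ne',
        show (4:ℝ)*Real.cos a*Real.cos a = 2*(2*(Real.cos a*Real.cos a)) by ring,
        Real.log_mul (by norm_num) (by positivity),
        Real.log_mul (by norm_num) (by positivity),
        Real.log_mul hca.ne' hca.ne']
      ring
    rw [e1, e2]
    constructor
    · intro hlt
      have ha4 : a < π/4 := by rw [ha]; nlinarith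
      have hmono := Real.strictMonoOn_sin (Set.mem_Icc.mpr ⟨by linarith, by linarith⟩)
        (Set.mem_Icc.mpr ⟨by linarith, by linarith⟩) (show a < π/2 - a by linarith)
      rw [Real.sin_pi_div_two_sub] at hmono
      have hlog : Real.log (4 * Real.sin a * Real.cos a)
          < Real.log (4 * Real.cos a * Real.cos a) :=
        Real.log_lt_log (by positivity) (by nlinarith)
      rw [← e3] at hlog
      nlinarith
    · intro hgt
      have ha4 : π/4 < a := by rw [ha]; nlinarith
      have hmono := Real.strictMonoOn_sin (Set.mem_Icc.mpr ⟨by linarith, by linarith⟩)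
        (Set.mem_Icc.mpr ⟨by linarith, by linarith⟩) (show π/2 - a < a by linarith)
      rw [Real.sin_pi_div_two_sub] at hmono
      have hlog : Real.log (4 * Real.cos a * Real.cos a)
          < Real.log (4 * Real.sin a * Real.cos a) :=
        Real.log_lt_log (by positivity) (by nlinarith)
      rw [← e3] at hlog
      nlinarith
  have hmono : StrictMonoOn H (Set.Icc 0 (1/2)) := by
    apply strictMonoOn_of_deriv_pos (convex_Icc _ _) hcont.continuousOn
    intro v hv
    rw [interior_Icc] at hv
    exact ((sign v hv.1 (by linarith [hv.2]) (ne_of_lt hv.2)).1 hv.2)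
  have hanti : StrictAntiOn H (Set.Icc (1/2) 1) := by
    apply strictAntiOn_of_deriv_neg (convex_Icc _ _) hcont.continuousOn
    intro v hv
    rw [interior_Icc] at hv
    exact ((sign v (by linarith [hv.1]) hv.2 (ne_of_gt hv.1)).2 hv.1)
  rcases lt_or_gt_of_ne hne with hlt | hgt
  · have := hmono ⟨h1, hlt.le⟩ ⟨by norm_num, le_refl _⟩ hlt
    rw [hval] at this
    exact this
  · have := hanti ⟨le_refl _, by norm_num⟩ ⟨hgt.le, h2⟩ hgt
    rw [hval] at this
    exact this

lemma G_le {t : ℝ} (h1 : 0 ≤ t) (h2 : t ≤ 1) :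
    4 * Lob (π*(1-t)/2) + Lob (π*t) ≤ 4 * Lob (π/4) := by
  rcases eq_or_ne t (1/2) with rfl | hne
  · rw [show π*(1-(1:ℝ)/2)/2 = π/4 by ring, show π*((1:ℝ)/2) = π/2 by ring, Lob_half]
    ring_nf
    exact le_refl _
  · exact (G_lt h1 h2 hne).le

end LobAux

open LobAux in
theorem stmt_17 (x y s : ℝ) (hx : 0 ≤ x) (hy : 0 ≤ y) (hxy : x + y ≤ s) (hs : s ≤ 1) :
    (Lob (π*(s - x - y)) - Lob (π*(s - y)) + Lob (π*y) - Lob (π*(x + y)) + Lob (π*x)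
        ≤ 4 * Lob (π/4)) ∧
    (Lob (π*(s - x - y)) - Lob (π*(s - y)) + Lob (π*y) - Lob (π*(x + y)) + Lob (π*x)
        = 4 * Lob (π/4) ↔ x = 1/2 ∧ y = 1/4 ∧ s = 1) := by
  have hpi := Real.pi_pos
  have hq := Lob_quarter_pos
  have hx1 : x ≤ 1 := by linarith
  rcases eq_or_lt_of_le hx with hx0 | hx0
  · -- x = 0
    subst hx0
    have e0 : Lob (π*(s - 0 - y)) = Lob (π*(s - y)) := by rw [show s - 0 - y = s - y by ring]
    have e0' : Lob (π*(0 + y)) = Lob (π*y) := by rw [show (0:ℝ) + y = y by ring]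
    have ez : Lob (π*(0:ℝ)) = 0 := by rw [mul_zero, Lob_zero]
    constructor
    · linarith
    · constructor
      · intro h; exfalso; rw [e0, e0', ez] at h; linarith
      · rintro ⟨h1, -⟩; exfalso; norm_num at h1
  rcases eq_or_lt_of_le hx1 with hx1' | hx1'
  · -- x = 1
    have hy0 : y = 0 := le_antisymm (by linarith) hy
    have hs1 : s = 1 := le_antisymm hs (by linarith)
    subst hx1' hy0 hs1
    have ez1 : Lob (π*(1 - 1 - 0:ℝ)) = 0 := by norm_num [Lob_zero]
    have ez2 : Lob (π*(0:ℝ)) = 0 := by rw [mul_zero, Lob_zero]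
    have ez3 : Lob (π*(1 - 0:ℝ)) = 0 := by
      rw [show π*(1 - 0:ℝ) = π by ring, Lob_pi]
    have ez4 : Lob (π*(1 + 0:ℝ)) = 0 := by
      rw [show π*(1 + 0:ℝ) = π by ring, Lob_pi]
    have ez5 : Lob (π*(1:ℝ)) = 0 := by rw [show π*(1:ℝ) = π by ring, Lob_pi]
    constructor
    · linarith
    · constructor
      · intro h; exfalso; rw [ez1, ez2, ez3, ez4, ez5] at h; linarith
      · rintro ⟨h1, -⟩; exfalso; norm_num at h1
  · -- 0 < x < 1
    have hσ0 : 0 < π*(1-x) := by nlinarith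
    have hσπ : π*(1-x) < π := by nlinarith
    have e1 : Lob (π*(1-x) - π*(s-x-y)) = -Lob (π*(s - y)) := by
      rw [show π*(1-x) - π*(s-x-y) = π - π*(s-y) by ring]
      exact Lob_reflect _
    have e2 : Lob (π*(1-x) - π*y) = -Lob (π*(x + y)) := by
      rw [show π*(1-x) - π*y = π - π*(x+y) by ring]
      exact Lob_reflect _
    have hu1a : 0 ≤ π*(s-x-y) := mul_nonneg hpi.le (by linarith)
    have hu1b : π*(s-x-y) ≤ π*(1-x) := by nlinarith
    have hu2a : 0 ≤ π*y := mul_nonneg hpi.le hy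
    have hu2b : π*y ≤ π*(1-x) := by nlinarith
    have p1 : Lob (π*(s-x-y)) + Lob (π*(1-x) - π*(s-x-y)) ≤ 2 * Lob (π*(1-x)/2) :=
      pair_le hσ0 hσπ hu1a hu1b
    have p2 : Lob (π*y) + Lob (π*(1-x) - π*y) ≤ 2 * Lob (π*(1-x)/2) :=
      pair_le hσ0 hσπ hu2a hu2b
    have G := G_le hx hx1
    have main_le : Lob (π*(s - x - y)) - Lob (π*(s - y)) + Lob (π*y) - Lob (π*(x + y))
        + Lob (π*x) ≤ 4 * Lob (π/4) := by
      have hfix : Lob (π*(s - x - y)) = Lob (π*(s-x-y)) := rfl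
      linarith [p1, p2, G, e1, e2]
    have main_lt : ¬(x = 1/2 ∧ y = 1/4 ∧ s = 1) →
        Lob (π*(s - x - y)) - Lob (π*(s - y)) + Lob (π*y) - Lob (π*(x + y))
        + Lob (π*x) < 4 * Lob (π/4) := by
      intro hc
      by_cases hx2 : x = 1/2
      · subst hx2
        by_cases hy2 : y = 1/4
        · subst hy2
          have hs1 : s ≠ 1 := fun h => hc ⟨rfl, rfl, h⟩
          have hne : π*(s-1/2-1/4) ≠ π*(1-1/2)/2 := by
            intro heq
            apply hs1
            have heq' : π * (s - 1/2 - 1/4) = π * (1/4) := by rw [heq]; ring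
            have := mul_left_cancel₀ Real.pi_ne_zero heq'
            linarith
          have p1' : Lob (π*(s-1/2-1/4)) + Lob (π*(1-1/2) - π*(s-1/2-1/4))
              < 2 * Lob (π*(1-1/2)/2) :=
            pair_lt hσ0 hσπ hu1a hu1b hne
          linarith [p1', p2, G, e1, e2]
        · have hne : π*y ≠ π*(1-1/2)/2 := by
            intro heq
            apply hy2
            have heq' : π * y = π * (1/4) := by rw [heq]; ring
            have := mul_left_cancel₀ Real.pi_ne_zero heq'
            linarith
          have p2' : Lob (π*y) + Lob (π*(1-1/2) - π*y) < 2 * Lob (π*(1-1/2)/2) :=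
            pair_lt hσ0 hσπ hu2a hu2b hne
          linarith [p1, p2', G, e1, e2]
      · have G' : 4 * Lob (π*(1-x)/2) + Lob (π*x) < 4 * Lob (π/4) := G_lt hx hx1 hx2
        linarith [p1, p2, G', e1, e2]
    refine ⟨main_le, ⟨fun hFeq => ?_, fun hc => ?_⟩⟩
    · by_contra hne
      exact (main_lt hne).ne hFeq
    · obtain ⟨h1, h2, h3⟩ := hc
      subst h1 h2 h3
      have r3 : Lob (π*(1 - 1/2 - 1/4:ℝ)) = Lob (π*(1/4:ℝ)) := by
        rw [show π*(1 - 1/2 - 1/4:ℝ) = π*(1/4:ℝ) by ring]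
      have r1 : Lob (π*(1 - 1/4:ℝ)) = -Lob (π*(1/4:ℝ)) := Lob_reflect' _
      have r2 : Lob (π*(1/2 + 1/4:ℝ)) = -Lob (π*(1/4:ℝ)) := by
        rw [show π*(1/2 + 1/4:ℝ) = π*(1 - 1/4:ℝ) by ring]
        exact Lob_reflect' _
      have r4 : Lob (π*(1/2:ℝ)) = 0 := by
        rw [show π*(1/2:ℝ) = π/2 by ring, Lob_half]
      have r5 : Lob (π*(1/4:ℝ)) = Lob (π/4) := by
        rw [show π*(1/4:ℝ) = π/4 by ring]
      rw [r3, r1, r2, r4, r5]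
      ring
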